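/- arXiv:1310.8442 — 2 statements merged into one kernel-verified Lean document; each statement's English description precedes it below -/
import Mathlib

section
/- Let s ≥ 5 and n ≥ s be integers, and let G be a {1,3}-graph on vertex set [n] whose singleton edges are exactly {1}, {2}, {3}, {4} and whose 3-uniform edge set E³ contains all 3-element subsets of [s]. Then λ'(G) > 1 + 3/8 = λ'(K_4^{{1,3}}). In particular, the legal weighting with x_1 = x_2 = x_3 = x_4 = 0.2498, x_5 = … = x_s = 0.0008/(s-4), and x_{s+1} = … = x_n = 0 witnesses this strict inequality. -/
open Finset

/-- λ'(H,x) = Σ_{e∈E} |e|! · ∏_{i∈e} x_i  (equals Σ_{j∈R(H)} j!·Σ_{|e|=j} ∏ x_i). -/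
noncomputable def lagPoly {n : ℕ} (E : Finset (Finset (Fin n))) (x : Fin n → ℝ) : ℝ :=
  ∑ e ∈ E, (Nat.factorial e.card : ℝ) * ∏ i ∈ e, x i

/-- A legal weighting: nonnegative entries summing to 1. -/
def isLegal {n : ℕ} (x : Fin n → ℝ) : Prop :=
  (∑ i, x i) = 1 ∧ ∀ i, 0 ≤ x i

/-- The Lagrangian λ'(H): the maximum of λ'(H,x) over legal weightings. -/
noncomputable def lagrangian {n : ℕ} (E : Finset (Finset (Fin n))) : ℝ :=
  sSup {v : ℝ | ∃ x : Fin n → ℝ, isLegal x ∧ lagPoly E x = v}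

/-- Edge set of the complete hypergraph K_t^R on vertex set [t]. -/
def completeEdges (t : ℕ) (R : Finset ℕ) : Finset (Finset (Fin t)) :=
  Finset.univ.filter (fun e => e.card ∈ R)

/-- S induces a complete R-subgraph: every subset of S with cardinality in R is an edge. -/
def isCompleteSub {n : ℕ} (E : Finset (Finset (Fin n))) (R : Finset ℕ) (S : Finset (Fin n)) : Prop :=
  ∀ e ⊆ S, e.card ∈ R → e ∈ E

/-- The maximum complete R-subgraph of H has order t. -/
def maxCompleteOrder {n : ℕ} (E : Finset (Finset (Fin n))) (R : Finset ℕ) (t : ℕ) : Prop :=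
  (∃ S, S.card = t ∧ isCompleteSub E R S) ∧ ∀ S, isCompleteSub E R S → S.card ≤ t

private lemma triple_card_prod {n : ℕ} (x : Fin n → ℝ) (a b c : Fin n)
    (hab : a ≠ b) (hac : a ≠ c) (hbc : b ≠ c) :
    ({a,b,c} : Finset (Fin n)).card = 3 ∧
      ∏ k ∈ ({a,b,c} : Finset (Fin n)), x k = x a * x b * x c := by
  have h1 : a ∉ ({b,c} : Finset (Fin n)) := by simp [hab, hac]
  have h2 : b ∉ ({c} : Finset (Fin n)) := by simp [hbc]
  refine ⟨?_, ?_⟩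
  · rw [Finset.card_insert_of_notMem h1, Finset.card_insert_of_notMem h2,
      Finset.card_singleton]
  · rw [Finset.prod_insert h1, Finset.prod_insert h2, Finset.prod_singleton, mul_assoc]

private lemma triple_inj' {n : ℕ} (a b c a' b' c' : Fin n)
    (h1 : (a:ℕ) < (b:ℕ)) (h2 : (b:ℕ) < 4) (h3 : (a':ℕ) < (b':ℕ)) (h4 : (b':ℕ) < 4)
    (h5 : 4 ≤ (c:ℕ)) (h6 : 4 ≤ (c':ℕ))
    (h : ({a,b,c} : Finset (Fin n)) = {a',b',c'}) :
    (a:ℕ) = (a':ℕ) ∧ (b:ℕ) = (b':ℕ) ∧ (c:ℕ) = (c':ℕ) := by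
  have hc : c ∈ ({a',b',c'} : Finset (Fin n)) := by rw [← h]; simp
  have ha : a ∈ ({a',b',c'} : Finset (Fin n)) := by rw [← h]; simp
  have hb : b ∈ ({a',b',c'} : Finset (Fin n)) := by rw [← h]; simp
  have ha' : a' ∈ ({a,b,c} : Finset (Fin n)) := by rw [h]; simp
  simp only [Finset.mem_insert, Finset.mem_singleton, Fin.ext_iff] at hc ha hb ha'
  omega

private lemma triple_ne' {n : ℕ} (w a b c a' b' c' : Fin n) (hw : w ∈ ({a,b,c}:Finset (Fin n)))
    (h1 : w ≠ a') (h2 : w ≠ b') (h3 : w ≠ c') :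
    ({a,b,c}:Finset (Fin n)) ≠ ({a',b',c'}:Finset (Fin n)) := by
  intro he
  rw [he] at hw
  simp only [Finset.mem_insert, Finset.mem_singleton] at hw
  tauto

private lemma lagPoly_bddAbove {n : ℕ} (E : Finset (Finset (Fin n))) :
    BddAbove {v : ℝ | ∃ x : Fin n → ℝ, isLegal x ∧ lagPoly E x = v} := by
  refine ⟨∑ e ∈ E, (Nat.factorial e.card : ℝ), ?_⟩
  rintro v ⟨x, ⟨hsum, hnn⟩, rfl⟩
  apply Finset.sum_le_sum
  intro e _
  have h1 : ∏ i ∈ e, x i ≤ 1 := by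
    apply Finset.prod_le_one (fun i _ => hnn i)
    intro i _
    calc x i ≤ ∑ j, x j := Finset.single_le_sum (fun j _ => hnn j) (Finset.mem_univ i)
      _ = 1 := hsum
  calc (Nat.factorial e.card : ℝ) * ∏ i ∈ e, x i
      ≤ (Nat.factorial e.card : ℝ) * 1 := by
        apply mul_le_mul_of_nonneg_left h1 (by positivity)
    _ = _ := mul_one _

private lemma lagPoly_complete_eval (x : Fin 4 → ℝ) :
    lagPoly (completeEdges 4 ({1,3} : Finset ℕ)) x =
      (x 0 + x 1 + x 2 + x 3) +
      6*(x 0*x 1*x 2 + x 0*x 1*x 3 + x 0*x 2*x 3 + x 1*x 2*x 3) := by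
  rw [show (completeEdges 4 ({1,3} : Finset ℕ)) =
    ({{0},{1},{2},{3},{0,1,2},{0,1,3},{0,2,3},{1,2,3}} : Finset (Finset (Fin 4))) from by decide]
  rw [lagPoly]
  rw [Finset.sum_insert (by decide), Finset.sum_insert (by decide), Finset.sum_insert (by decide),
    Finset.sum_insert (by decide), Finset.sum_insert (by decide), Finset.sum_insert (by decide),
    Finset.sum_insert (by decide), Finset.sum_singleton]
  rw [Finset.prod_insert (by decide), Finset.prod_insert (by decide), Finset.prod_insert (by decide),
    Finset.prod_insert (by decide), Finset.prod_insert (by decide), Finset.prod_insert (by decide)]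
  simp [Nat.factorial]
  ring

private lemma lagrangian_complete : lagrangian (completeEdges 4 ({1,3} : Finset ℕ)) = 1 + 3 / 8 := by
  have hwit : isLegal (fun _ : Fin 4 => (1/4 : ℝ)) := by
    constructor
    · rw [Fin.sum_univ_four]; norm_num
    · intro i; norm_num
  have hval : lagPoly (completeEdges 4 ({1,3} : Finset ℕ)) (fun _ : Fin 4 => (1/4 : ℝ)) = 1 + 3/8 := by
    rw [lagPoly_complete_eval]; norm_num
  have hmem : (1 + 3/8 : ℝ) ∈ {v : ℝ | ∃ x : Fin 4 → ℝ, isLegal x ∧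
      lagPoly (completeEdges 4 ({1,3} : Finset ℕ)) x = v} := ⟨_, hwit, hval⟩
  apply le_antisymm
  · apply csSup_le ⟨_, hmem⟩
    rintro v ⟨y, ⟨hsum, hnn⟩, rfl⟩
    rw [lagPoly_complete_eval]
    rw [Fin.sum_univ_four] at hsum
    have h0 := hnn 0; have h1 := hnn 1; have h2 := hnn 2; have h3 := hnn 3
    nlinarith [sq_nonneg (y 0 - y 1), sq_nonneg (y 0 - y 2), sq_nonneg (y 0 - y 3),
      sq_nonneg (y 1 - y 2), sq_nonneg (y 1 - y 3), sq_nonneg (y 2 - y 3),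
      sq_nonneg (y 0 + y 1 - y 2 - y 3), sq_nonneg (y 0 + y 2 - y 1 - y 3),
      sq_nonneg (y 0 + y 3 - y 1 - y 2),
      mul_nonneg h0 h1, mul_nonneg h2 h3, mul_nonneg h0 h2, mul_nonneg h1 h3,
      mul_nonneg h0 h3, mul_nonneg h1 h2]
  · exact le_csSup (lagPoly_bddAbove _) hmem

/-- The counterexample for t = 4: a {1,3}-graph with exactly the singletons {1},{2},{3},{4} and all
3-subsets of [s] as 3-edges has Lagrangian exceeding λ'(K_4^{1,3}) = 1 + 3/8. -/
theorem counterexample_t_four (s n : ℕ) (hs : 5 ≤ s) (hn : s ≤ n)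
    (E : Finset (Finset (Fin n)))
    (hR : E.image Finset.card = ({1, 3} : Finset ℕ))
    (h1 : E.filter (fun e => e.card = 1) =
      ({{⟨0, by omega⟩}, {⟨1, by omega⟩}, {⟨2, by omega⟩}, {⟨3, by omega⟩}} :
        Finset (Finset (Fin n))))
    (h3 : ∀ e : Finset (Fin n), e.card = 3 → (∀ v ∈ e, (v : ℕ) < s) → e ∈ E) :
    lagrangian E > 1 + 3 / 8 ∧
    lagrangian (completeEdges 4 ({1, 3} : Finset ℕ)) = 1 + 3 / 8 ∧
    isLegal (fun v : Fin n => if (v : ℕ) < 4 then (0.2498 : ℝ)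
      else if (v : ℕ) < s then (0.0008 : ℝ) / ((s : ℝ) - 4) else 0) ∧
    lagPoly E (fun v : Fin n => if (v : ℕ) < 4 then (0.2498 : ℝ)
        else if (v : ℕ) < s then (0.0008 : ℝ) / ((s : ℝ) - 4) else 0) > 1 + 3 / 8 := by
  have hn5 : 5 ≤ n := hs.trans hn
  have hn0 : 0 < n := by omega
  have hs5 : (5:ℝ) ≤ (s:ℝ) := by exact_mod_cast hs
  have hcpos : (0:ℝ) < (s:ℝ) - 4 := by linarith
  set x : Fin n → ℝ := fun v : Fin n => if (v : ℕ) < 4 then (0.2498 : ℝ)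
      else if (v : ℕ) < s then (0.0008 : ℝ) / ((s : ℝ) - 4) else 0 with hxdef
  have hxval4 : ∀ i : Fin n, (i:ℕ) < 4 → x i = 0.2498 := by
    intro i hi; simp only [hxdef]; rw [if_pos hi]
  have hxvalm : ∀ i : Fin n, 4 ≤ (i:ℕ) → (i:ℕ) < s → x i = 0.0008 / ((s:ℝ) - 4) := by
    intro i h4 hsi; simp only [hxdef]; rw [if_neg (by omega), if_pos hsi]
  have hxnn : ∀ i, 0 ≤ x i := by
    intro i; simp only [hxdef]
    split_ifs
    · norm_num
    · exact div_nonneg (by norm_num) (by linarith)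
    · exact le_refl 0
  -- legality
  have hsum1 : ∑ i, x i = 1 := by
    have h0 : ∑ i, x i = ∑ k ∈ Finset.range n,
        (if k < 4 then (0.2498:ℝ) else if k < s then 0.0008 / ((s:ℝ) - 4) else 0) := by
      rw [hxdef]; exact Fin.sum_univ_eq_sum_range (fun k => if k < 4 then (0.2498:ℝ) else if k < s then 0.0008 / ((s:ℝ) - 4) else 0) n
    rw [h0, Finset.range_eq_Ico,
      ← Finset.sum_Ico_consecutive _ (show 0 ≤ 4 by omega) (show 4 ≤ n by omega),
      ← Finset.sum_Ico_consecutive _ (show 4 ≤ s by omega) hn]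
    have e1 : ∑ k ∈ Finset.Ico 0 4,
        (if k < 4 then (0.2498:ℝ) else if k < s then 0.0008 / ((s:ℝ) - 4) else 0) = 4 * 0.2498 := by
      rw [Finset.sum_congr rfl (g := fun _ => (0.2498:ℝ))
        (fun k hk => if_pos (by rw [Finset.mem_Ico] at hk; omega)),
        Finset.sum_const, Nat.card_Ico, nsmul_eq_mul]
      norm_num
    have e2 : ∑ k ∈ Finset.Ico 4 s,
        (if k < 4 then (0.2498:ℝ) else if k < s then 0.0008 / ((s:ℝ) - 4) else 0) = 0.0008 := by
      rw [Finset.sum_congr rfl (g := fun _ => 0.0008 / ((s:ℝ) - 4))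
        (fun k hk => by rw [Finset.mem_Ico] at hk; rw [if_neg (by omega), if_pos (by omega)]),
        Finset.sum_const, Nat.card_Ico, nsmul_eq_mul, Nat.cast_sub (by omega)]
      push_cast
      field_simp
    have e3 : ∑ k ∈ Finset.Ico s n,
        (if k < 4 then (0.2498:ℝ) else if k < s then 0.0008 / ((s:ℝ) - 4) else 0) = 0 := by
      rw [Finset.sum_congr rfl (g := fun _ => (0:ℝ))
        (fun k hk => by rw [Finset.mem_Ico] at hk; rw [if_neg (by omega), if_neg (by omega)]),
        Finset.sum_const, smul_zero]
    rw [e1, e2, e3]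
    norm_num
  have hlegal : isLegal x := ⟨hsum1, hxnn⟩
  -- machinery for the triple edges
  obtain ⟨F, hFval⟩ : ∃ F : ℕ → Fin n, ∀ k, k < n → ((F k):ℕ) = k :=
    ⟨fun k => ⟨k % n, Nat.mod_lt k hn0⟩, fun k hk => Nat.mod_eq_of_lt hk⟩
  have hFne : ∀ i j, i < n → j < n → i ≠ j → F i ≠ F j := by
    intro i j hi hj hij h
    apply hij
    have := congrArg Fin.val h
    rwa [hFval _ hi, hFval _ hj] at this
  have hxF : ∀ k, k < 4 → x (F k) = 0.2498 := fun k hk =>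
    hxval4 _ (by rw [hFval k (by omega)]; omega)
  have hxFm : ∀ v, 4 ≤ v → v < s → x (F v) = 0.0008 / ((s:ℝ) - 4) := fun v h4 hv =>
    hxvalm _ (by rw [hFval v (by omega)]; omega) (by rw [hFval v (by omega)]; omega)
  -- any increasing triple within [s] is an edge, with known term value
  have hquad : ∀ i j v : ℕ, i < j → j < v → v < s →
      ({F i, F j, F v} : Finset (Fin n)) ∈ E ∧
      (Nat.factorial ({F i, F j, F v} : Finset (Fin n)).card : ℝ) *
          ∏ k ∈ ({F i, F j, F v} : Finset (Fin n)), x k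
        = 6 * (x (F i) * x (F j) * x (F v)) ∧
      ({F i, F j, F v} : Finset (Fin n)).card = 3 := by
    intro i j v hij hjv hvs
    have hvn : v < n := by omega
    have hne1 : F i ≠ F j := hFne i j (by omega) (by omega) (by omega)
    have hne2 : F i ≠ F v := hFne i v (by omega) (by omega) (by omega)
    have hne3 : F j ≠ F v := hFne j v (by omega) (by omega) (by omega)
    obtain ⟨hc, hp⟩ := triple_card_prod x (F i) (F j) (F v) hne1 hne2 hne3
    refine ⟨h3 _ hc ?_, ?_, hc⟩
    · intro w hw
      simp only [Finset.mem_insert, Finset.mem_singleton] at hw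
      rcases hw with rfl | rfl | rfl
      · rw [hFval i (by omega)]; omega
      · rw [hFval j (by omega)]; omega
      · rw [hFval v (by omega)]; omega
    · rw [hc, hp]
      norm_num [Nat.factorial]
  -- index sets
  set P : Finset (ℕ × ℕ) := {(0,1),(0,2),(0,3),(1,2),(1,3),(2,3)} with hPdef
  have hP : ∀ p ∈ P, p.1 < p.2 ∧ p.2 < 4 := by decide
  set I : Finset (ℕ × ℕ × ℕ) := (Finset.Ico 4 s) ×ˢ P with hIdef
  set g : ℕ × ℕ × ℕ → Finset (Fin n) := fun q => ({F q.2.1, F q.2.2, F q.1} : Finset (Fin n))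
    with hgdef
  set T₀ : Finset (Finset (Fin n)) :=
    {{F 0, F 1, F 2}, {F 0, F 1, F 3}, {F 0, F 2, F 3}, {F 1, F 2, F 3}} with hT0def
  have hqI : ∀ q ∈ I, q.2.1 < q.2.2 ∧ q.2.2 < 4 ∧ 4 ≤ q.1 ∧ q.1 < s := by
    intro q hq
    obtain ⟨hq1, hq2⟩ := Finset.mem_product.mp hq
    rw [Finset.mem_Ico] at hq1
    obtain ⟨ha, hb⟩ := hP _ hq2
    exact ⟨ha, hb, hq1.1, hq1.2⟩
  -- the big term evaluation on I
  have hterm : ∀ q ∈ I, (Nat.factorial (g q).card : ℝ) * ∏ k ∈ g q, x k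
      = 6 * (0.2498 * 0.2498 * (0.0008 / ((s:ℝ) - 4))) := by
    intro q hq
    obtain ⟨ha, hb, hc', hd⟩ := hqI q hq
    have := (hquad q.2.1 q.2.2 q.1 ha (by omega) (by omega)).2.1
    rw [hgdef]
    rw [this, hxF q.2.1 (by omega), hxF q.2.2 (by omega), hxFm q.1 (by omega) (by omega)]
  have hginj : ∀ q ∈ I, ∀ r ∈ I, g q = g r → q = r := by
    intro q hq r hr h
    obtain ⟨ha, hb, hc', hd⟩ := hqI q hq
    obtain ⟨ha', hb', hc'', hd'⟩ := hqI r hr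
    have v1 : ((F q.2.1):ℕ) = q.2.1 := hFval _ (by omega)
    have v2 : ((F q.2.2):ℕ) = q.2.2 := hFval _ (by omega)
    have v3 : ((F q.1):ℕ) = q.1 := hFval _ (by omega)
    have w1 : ((F r.2.1):ℕ) = r.2.1 := hFval _ (by omega)
    have w2 : ((F r.2.2):ℕ) = r.2.2 := hFval _ (by omega)
    have w3 : ((F r.1):ℕ) = r.1 := hFval _ (by omega)
    obtain ⟨e1, e2, e3⟩ := triple_inj' (F q.2.1) (F q.2.2) (F q.1) (F r.2.1) (F r.2.2) (F r.1)
      (by omega) (by omega) (by omega) (by omega) (by omega) (by omega) h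
    have : q.2.1 = r.2.1 ∧ q.2.2 = r.2.2 ∧ q.1 = r.1 := by omega
    obtain ⟨f1, f2, f3⟩ := this
    exact Prod.ext f3 (Prod.ext f1 f2)
  -- sum over the image family
  have hsImg : ∑ e ∈ I.image g, (Nat.factorial e.card : ℝ) * ∏ k ∈ e, x k
      = ((s - 4) * 6 : ℕ) * (6 * (0.2498 * 0.2498 * (0.0008 / ((s:ℝ) - 4)))) := by
    rw [Finset.sum_image hginj, Finset.sum_congr rfl hterm, Finset.sum_const,
      nsmul_eq_mul, hIdef, Finset.card_product, Nat.card_Ico]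
    norm_num [hPdef]
  -- sum over T₀
  have hT0ne : ∀ i j v i' j' v' : ℕ, i < n → j < n → v < n → i' < n → j' < n → v' < n →
      v ≠ i' → v ≠ j' → v ≠ v' →
      ({F i, F j, F v} : Finset (Fin n)) ≠ ({F i', F j', F v'} : Finset (Fin n)) := by
    intro i j v i' j' v' hi hj hv hi' hj' hv' n1 n2 n3
    exact triple_ne' (F v) _ _ _ _ _ _ (by simp)
      (hFne v i' hv hi' n1) (hFne v j' hv hj' n2) (hFne v v' hv hv' n3)
  have hsT0 : ∑ e ∈ T₀, (Nat.factorial e.card : ℝ) * ∏ k ∈ e, x k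
      = 24 * (0.2498 * 0.2498 * 0.2498) := by
    rw [hT0def]
    rw [Finset.sum_insert (by
        simp only [Finset.mem_insert, Finset.mem_singleton]
        push_neg
        refine ⟨?_, ?_, ?_⟩
        · exact triple_ne' (F 2) _ _ _ _ _ _ (by simp)
            (hFne 2 0 (by omega) (by omega) (by omega))
            (hFne 2 1 (by omega) (by omega) (by omega))
            (hFne 2 3 (by omega) (by omega) (by omega))
        · exact triple_ne' (F 1) _ _ _ _ _ _ (by simp)
            (hFne 1 0 (by omega) (by omega) (by omega))
            (hFne 1 2 (by omega) (by omega) (by omega))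
            (hFne 1 3 (by omega) (by omega) (by omega))
        · exact triple_ne' (F 0) _ _ _ _ _ _ (by simp)
            (hFne 0 1 (by omega) (by omega) (by omega))
            (hFne 0 2 (by omega) (by omega) (by omega))
            (hFne 0 3 (by omega) (by omega) (by omega))),
      Finset.sum_insert (by
        simp only [Finset.mem_insert, Finset.mem_singleton]
        push_neg
        refine ⟨?_, ?_⟩
        · exact triple_ne' (F 1) _ _ _ _ _ _ (by simp)
            (hFne 1 0 (by omega) (by omega) (by omega))
            (hFne 1 2 (by omega) (by omega) (by omega))
            (hFne 1 3 (by omega) (by omega) (by omega))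
        · exact triple_ne' (F 0) _ _ _ _ _ _ (by simp)
            (hFne 0 1 (by omega) (by omega) (by omega))
            (hFne 0 2 (by omega) (by omega) (by omega))
            (hFne 0 3 (by omega) (by omega) (by omega))),
      Finset.sum_insert (by
        simp only [Finset.mem_singleton]
        exact triple_ne' (F 0) _ _ _ _ _ _ (by simp)
            (hFne 0 1 (by omega) (by omega) (by omega))
            (hFne 0 2 (by omega) (by omega) (by omega))
            (hFne 0 3 (by omega) (by omega) (by omega))),
      Finset.sum_singleton]
    rw [(hquad 0 1 2 (by omega) (by omega) (by omega)).2.1,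
      (hquad 0 1 3 (by omega) (by omega) (by omega)).2.1,
      (hquad 0 2 3 (by omega) (by omega) (by omega)).2.1,
      (hquad 1 2 3 (by omega) (by omega) (by omega)).2.1,
      hxF 0 (by omega), hxF 1 (by omega), hxF 2 (by omega), hxF 3 (by omega)]
    ring
  -- T₀ and the image family are disjoint
  have hdisj : Disjoint T₀ (I.image g) := by
    rw [Finset.disjoint_left]
    intro e he hei
    obtain ⟨q, hq, rfl⟩ := Finset.mem_image.mp hei
    obtain ⟨ha, hb, hc', hd⟩ := hqI q hq
    have hmemq : F q.1 ∈ g q := by rw [hgdef]; simp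
    have hlt : ∀ w ∈ g q, w ∈ g q := fun w hw => hw
    have hvq : ((F q.1):ℕ) = q.1 := hFval _ (by omega)
    rw [hT0def] at he
    simp only [Finset.mem_insert, Finset.mem_singleton] at he
    have hbad : ∀ a b c : ℕ, a < 4 → b < 4 → c < 4 →
        g q ≠ ({F a, F b, F c} : Finset (Fin n)) := by
      intro a b c ha4 hb4 hc4 heq
      rw [heq] at hmemq
      simp only [Finset.mem_insert, Finset.mem_singleton] at hmemq
      rcases hmemq with h' | h' | h' <;>
      · have := congrArg Fin.val h'
        rw [hvq, hFval _ (by omega)] at this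
        omega
    rcases he with h' | h' | h' | h'
    · exact hbad 0 1 2 (by omega) (by omega) (by omega) h'
    · exact hbad 0 1 3 (by omega) (by omega) (by omega) h'
    · exact hbad 0 2 3 (by omega) (by omega) (by omega) h'
    · exact hbad 1 2 3 (by omega) (by omega) (by omega) h'
  -- the chosen triples are all non-singleton edges
  have hTsub : T₀ ∪ I.image g ⊆ E.filter (fun e => ¬ e.card = 1) := by
    intro e he
    rw [Finset.mem_union] at he
    rw [Finset.mem_filter]
    rcases he with he | he
    · rw [hT0def] at he
      simp only [Finset.mem_insert, Finset.mem_singleton] at he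
      rcases he with rfl | rfl | rfl | rfl
      · obtain ⟨hE, -, hc⟩ := hquad 0 1 2 (by omega) (by omega) (by omega)
        exact ⟨hE, by rw [hc]; omega⟩
      · obtain ⟨hE, -, hc⟩ := hquad 0 1 3 (by omega) (by omega) (by omega)
        exact ⟨hE, by rw [hc]; omega⟩
      · obtain ⟨hE, -, hc⟩ := hquad 0 2 3 (by omega) (by omega) (by omega)
        exact ⟨hE, by rw [hc]; omega⟩
      · obtain ⟨hE, -, hc⟩ := hquad 1 2 3 (by omega) (by omega) (by omega)
        exact ⟨hE, by rw [hc]; omega⟩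
    · obtain ⟨q, hq, rfl⟩ := Finset.mem_image.mp he
      obtain ⟨ha, hb, hc', hd⟩ := hqI q hq
      obtain ⟨hE, -, hc⟩ := hquad q.2.1 q.2.2 q.1 ha (by omega) (by omega)
      exact ⟨hE, by rw [hgdef]; rw [hc]; omega⟩
  -- the singleton part sums to 0.9992
  have hS1 : ∑ e ∈ E.filter (fun e => e.card = 1), (Nat.factorial e.card : ℝ) * ∏ i ∈ e, x i
      = 4 * 0.2498 := by
    rw [h1]
    rw [Finset.sum_insert (by simp), Finset.sum_insert (by simp), Finset.sum_insert (by simp),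
      Finset.sum_singleton]
    simp only [Finset.card_singleton, Nat.factorial_one, Nat.cast_one, one_mul,
      Finset.prod_singleton]
    rw [hxval4 _ (by simp), hxval4 _ (by simp), hxval4 _ (by simp), hxval4 _ (by simp)]
    ring
  -- the main lower bound
  have hmain : lagPoly E x > 1 + 3 / 8 := by
    rw [lagPoly, ← Finset.sum_filter_add_sum_filter_not E (fun e => e.card = 1), hS1]
    have hlow : ∑ e ∈ E.filter (fun e => ¬ e.card = 1),
        (Nat.factorial e.card : ℝ) * ∏ i ∈ e, x i
        ≥ ∑ e ∈ T₀ ∪ I.image g, (Nat.factorial e.card : ℝ) * ∏ i ∈ e, x i := by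
      apply Finset.sum_le_sum_of_subset_of_nonneg hTsub
      intro e _ _
      exact mul_nonneg (by positivity) (Finset.prod_nonneg (fun i _ => hxnn i))
    rw [Finset.sum_union hdisj, hsT0, hsImg] at hlow
    have hkey : (((s - 4) * 6 : ℕ) : ℝ) * (6 * (0.2498 * 0.2498 * (0.0008 / ((s:ℝ) - 4))))
        = 36 * (0.2498 * 0.2498 * 0.0008) := by
      rw [Nat.cast_mul, Nat.cast_sub (by omega)]
      push_cast
      field_simp
      ring
    rw [hkey] at hlow
    norm_num at hlow ⊢
    linarith
  refine ⟨?_, lagrangian_complete, hlegal, hmain⟩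
  have hmem : lagPoly E x ∈ {v : ℝ | ∃ y : Fin n → ℝ, isLegal y ∧ lagPoly E y = v} :=
    ⟨x, hlegal, rfl⟩
  exact lt_of_lt_of_le hmain (le_csSup (lagPoly_bddAbove E) hmem)
end

section
/- Let t, s, n be integers with 3 ≤ t ≤ s and n ≥ s+1. Let H be the {1,3}-graph on vertex set [n] whose singleton edges are {1},…,{t},{s+1} and whose 3-uniform edge set is [s]^{(3)} ∪ { {i_1, i_2, s+1} : {i_1,i_2} ∈ [t-1]^{(2)} } ∪ { {1, t, s+1} } (so that H has exactly C(s,3) + C(t-1,2) + 1 edges of size 3). Then λ'(H) > 1 + (t-1)(t-2)/t² = λ'(K_t^{{1,3}}). In particular, the legal weighting with x_1 = … = x_{t-1} = 1/t, x_t = x_{s+1} = 1/(2t), and all other coordinates 0 witnesses this strict inequality. -/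
open Finset

/-! ### Auxiliary lemmas -/

section Esymm

variable {ι : Type*} [DecidableEq ι]

lemma sum_pc_insert (x : ι → ℝ) {a : ι} {S : Finset ι} (ha : a ∉ S) (k : ℕ) :
    ∑ e ∈ (insert a S).powersetCard (k+1), ∏ i ∈ e, x i
      = ∑ e ∈ S.powersetCard (k+1), ∏ i ∈ e, x i
        + x a * ∑ e ∈ S.powersetCard k, ∏ i ∈ e, x i := by
  rw [Finset.powersetCard_succ_insert ha, Finset.sum_union, Finset.sum_image, Finset.mul_sum]
  · congr 1
    refine Finset.sum_congr rfl fun e he => ?_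
    have hae : a ∉ e := fun h => ha ((Finset.mem_powersetCard.1 he).1 h)
    rw [Finset.prod_insert hae]
  · intro e he f hf hef
    have hae : a ∉ e := fun h => ha ((Finset.mem_powersetCard.1 he).1 h)
    have haf : a ∉ f := fun h => ha ((Finset.mem_powersetCard.1 hf).1 h)
    rw [← Finset.erase_insert hae, ← Finset.erase_insert haf, hef]
  · rw [Finset.disjoint_left]
    intro e he hf
    obtain ⟨f, hf', rfl⟩ := Finset.mem_image.1 hf
    have : a ∉ f := fun h => ha ((Finset.mem_powersetCard.1 hf').1 h)
    exact ha ((Finset.mem_powersetCard.1 he).1 (Finset.mem_insert_self a f))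

omit [DecidableEq ι] in
lemma esymm1 (S : Finset ι) (x : ι → ℝ) :
    ∑ e ∈ S.powersetCard 1, ∏ i ∈ e, x i = ∑ i ∈ S, x i := by
  rw [Finset.powersetCard_one, Finset.sum_map]
  simp

lemma esymm2 (S : Finset ι) (x : ι → ℝ) :
    2 * ∑ e ∈ S.powersetCard 2, ∏ i ∈ e, x i
      = (∑ i ∈ S, x i)^2 - ∑ i ∈ S, (x i)^2 := by
  induction S using Finset.induction_on with
  | empty => simp [Finset.powersetCard_eq_empty.2 (by simp : (∅:Finset ι).card < 2)]
  | @insert a S ha ih =>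
    rw [show (2:ℕ) = 1 + 1 from rfl, sum_pc_insert x ha 1, esymm1,
      Finset.sum_insert ha, Finset.sum_insert ha]
    linear_combination ih

lemma esymm3 (S : Finset ι) (x : ι → ℝ) :
    6 * ∑ e ∈ S.powersetCard 3, ∏ i ∈ e, x i
      = (∑ i ∈ S, x i)^3 - 3 * (∑ i ∈ S, x i) * (∑ i ∈ S, (x i)^2)
        + 2 * ∑ i ∈ S, (x i)^3 := by
  induction S using Finset.induction_on with
  | empty => simp [Finset.powersetCard_eq_empty.2 (by simp : (∅:Finset ι).card < 3)]
  | @insert a S ha ih =>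
    have h2 := esymm2 S x
    rw [show (3:ℕ) = 2 + 1 from rfl, sum_pc_insert x ha 2,
      Finset.sum_insert ha, Finset.sum_insert ha, Finset.sum_insert ha]
    linear_combination ih + 3 * x a * h2

omit [DecidableEq ι] in
lemma sum_pc_const (S : Finset ι) (k : ℕ) (x : ι → ℝ) (c : ℝ) (h : ∀ i ∈ S, x i = c) :
    ∑ e ∈ S.powersetCard k, ∏ i ∈ e, x i = (S.card.choose k : ℝ) * c^k := by
  have hc : ∀ e ∈ S.powersetCard k, ∏ i ∈ e, x i = c^k := by
    intro e he
    obtain ⟨hsub, hcard⟩ := Finset.mem_powersetCard.1 he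
    rw [Finset.prod_congr rfl (fun i hi => h i (hsub hi)), Finset.prod_const, hcard]
  rw [Finset.sum_congr rfl hc, Finset.sum_const, Finset.card_powersetCard, nsmul_eq_mul]

end Esymm

lemma choose3_cast (t : ℕ) (ht : 3 ≤ t) :
    ((t.choose 3 : ℕ) : ℝ) * 6 = (t:ℝ) * ((t:ℝ)-1) * ((t:ℝ)-2) := by
  obtain ⟨m, rfl⟩ : ∃ m, t = m + 3 := ⟨t - 3, by omega⟩
  have h1 : (m+3).descFactorial 3 = Nat.factorial 3 * (m+3).choose 3 :=
    Nat.descFactorial_eq_factorial_mul_choose _ _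
  have h2 : (m+3).descFactorial 3 = (m+1)*((m+2)*((m+3)*1)) := by
    simp [Nat.descFactorial_succ, Nat.descFactorial]
  rw [show Nat.factorial 3 = 6 from rfl] at h1
  have h4 : 6 * (m+3).choose 3 = (m+1)*((m+2)*((m+3)*1)) := by omega
  have := congrArg (fun k : ℕ => (k : ℝ)) h4
  push_cast at this
  push_cast
  linarith [this]

lemma sum_f_ge (t : ℕ) (ht : 3 ≤ t) (x : Fin t → ℝ) (hs : ∑ i, x i = 1)
    (hp : ∀ i, 0 ≤ x i) :
    (3*(t:ℝ)-2)/(t:ℝ)^2 ≤ ∑ i, (3*(x i)^2 - 2*(x i)^3) := by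
  have hub : ∀ i, x i ≤ 1 := by
    intro i
    rw [← hs]
    exact Finset.single_le_sum (fun j _ => hp j) (mem_univ i)
  rcases eq_or_lt_of_le ht with h3 | h4
  · -- t = 3
    subst h3
    rw [Fin.sum_univ_three] at hs ⊢
    set a := x 0; set b := x 1; set c := x 2
    have ha := hp 0; have hb := hp 1; have hc := hp 2
    norm_num
    nlinarith [mul_nonneg (mul_nonneg ha hb) hc, mul_nonneg (sq_nonneg (a-b)) hc,
      mul_nonneg (sq_nonneg (b-c)) ha, mul_nonneg (sq_nonneg (a-c)) hb]
  · -- 4 ≤ t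
    set T := (t:ℝ) with hTdef
    have hT : (4:ℝ) ≤ T := by
      have h4' : (4:ℕ) ≤ t := h4
      rw [hTdef]; exact_mod_cast h4'
    have hT0 : (0:ℝ) < T := by linarith
    have tangent : ∀ i ∈ (univ : Finset (Fin t)),
        3/(T^2) - 2/(T^3) + (6/T - 6/T^2) * (x i - 1/T) ≤ 3*(x i)^2 - 2*(x i)^3 := by
      intro i _
      have h1 : 0 ≤ 3 - 4/T - 2*(x i) := by
        have : 4/T ≤ 1 := by rw [div_le_one hT0]; linarith
        linarith [hub i]
      have h2 : 0 ≤ (x i - 1/T)^2 * (3 - 4/T - 2*(x i)) := mul_nonneg (sq_nonneg _) h1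
      have h3 : (x i - 1/T)^2 * (3 - 4/T - 2*(x i))
          = (3*(x i)^2 - 2*(x i)^3)
            - (3/(T^2) - 2/(T^3) + (6/T - 6/T^2)*(x i - 1/T)) := by
        field_simp
        ring
      linarith [h3 ▸ h2]
    have hsum := Finset.sum_le_sum tangent
    have hL : ∑ _i : Fin t, (3/(T^2) - 2/(T^3)) + (6/T - 6/T^2) * (∑ i, (x i - 1/T))
        = (3*T-2)/T^2 := by
      rw [Finset.sum_const, Finset.sum_sub_distrib, hs, Finset.sum_const]
      simp only [card_univ, Fintype.card_fin, nsmul_eq_mul]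
      rw [← hTdef]
      field_simp
      try ring
    rw [Finset.sum_add_distrib, ← Finset.mul_sum] at hsum
    rw [Finset.sum_const] at hL hsum
    linarith [hsum, hL]

lemma lag13 (m : ℕ) (x : Fin m → ℝ) :
    lagPoly (completeEdges m {1,3}) x
      = (∑ i, x i) + 6 * ∑ e ∈ (univ : Finset (Fin m)).powersetCard 3, ∏ i ∈ e, x i := by
  have hsplit : completeEdges m {1,3}
      = (univ : Finset (Fin m)).powersetCard 1 ∪ (univ : Finset (Fin m)).powersetCard 3 := by
    ext e
    simp only [completeEdges, Finset.mem_filter, Finset.mem_union, Finset.mem_powersetCard,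
      Finset.mem_insert, Finset.mem_singleton, Finset.mem_univ, true_and, Finset.subset_univ]
    try tauto
  have hdisj : Disjoint ((univ : Finset (Fin m)).powersetCard 1)
      ((univ : Finset (Fin m)).powersetCard 3) := by
    rw [Finset.disjoint_left]
    intro e he hf
    have h1 := (Finset.mem_powersetCard.1 he).2
    have h3 := (Finset.mem_powersetCard.1 hf).2
    omega
  rw [lagPoly, hsplit, Finset.sum_union hdisj]
  congr 1
  · rw [← esymm1 univ x]
    refine Finset.sum_congr rfl fun e he => ?_
    rw [(Finset.mem_powersetCard.1 he).2]
    norm_num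
  · rw [Finset.mul_sum]
    refine Finset.sum_congr rfl fun e he => ?_
    rw [(Finset.mem_powersetCard.1 he).2]
    norm_num [Nat.factorial]

lemma lag_complete_eq (t : ℕ) (ht : 3 ≤ t) :
    lagrangian (completeEdges t ({1, 3} : Finset ℕ))
      = 1 + ((t : ℝ) - 1) * ((t : ℝ) - 2) / (t : ℝ) ^ 2 := by
  set T := (t:ℝ) with hTdef
  have hT3 : (3:ℝ) ≤ T := by rw [hTdef]; exact_mod_cast ht
  have hT0 : (0:ℝ) < T := by linarith
  apply IsGreatest.csSup_eq
  constructor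
  · refine ⟨fun _ => 1/T, ⟨?_, fun i => by positivity⟩, ?_⟩
    · rw [Finset.sum_const]
      simp only [card_univ, Fintype.card_fin, nsmul_eq_mul]
      field_simp
      exact hTdef.symm
    · rw [lag13, Finset.sum_const, sum_pc_const univ 3 _ (1/T) (fun _ _ => rfl)]
      simp only [card_univ, Fintype.card_fin, nsmul_eq_mul]
      have hc := choose3_cast t ht
      have hTne : T ≠ 0 := ne_of_gt hT0
      field_simp
      nlinarith [hc]
  · rintro v ⟨x, ⟨hs, hp⟩, rfl⟩
    rw [lag13, hs]
    have h3 := esymm3 (univ : Finset (Fin t)) x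
    rw [hs] at h3
    have hkey := sum_f_ge t ht x hs hp
    have hsplit : ∑ i, (3*(x i)^2 - 2*(x i)^3)
        = 3 * (∑ i, (x i)^2) - 2 * (∑ i, (x i)^3) := by
      rw [Finset.sum_sub_distrib, Finset.mul_sum, Finset.mul_sum]
    rw [hsplit] at hkey
    have h6 : 6 * ∑ e ∈ (univ : Finset (Fin t)).powersetCard 3, ∏ i ∈ e, x i
        ≤ (T-1)*(T-2)/T^2 := by
      rw [h3]
      have : (T-1)*(T-2)/T^2 = 1 - (3*T-2)/T^2 := by
        field_simp
        ring
      rw [this]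
      linarith
    linarith

lemma card_lows {n : ℕ} (k : ℕ) (hk : k ≤ n) :
    ((univ : Finset (Fin n)).filter fun v : Fin n => (v:ℕ) < k).card = k := by
  have : ((univ : Finset (Fin n)).filter fun v : Fin n => (v:ℕ) < k)
      = (univ : Finset (Fin k)).map ⟨Fin.castLE hk, Fin.castLE_injective hk⟩ := by
    ext v
    simp only [Finset.mem_filter, Finset.mem_univ, true_and, Finset.mem_map,
      Function.Embedding.coeFn_mk]
    constructor
    · intro hv
      exact ⟨⟨(v:ℕ), hv⟩, by ext; simp [Fin.castLE]⟩
    · rintro ⟨w, rfl⟩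
      exact w.isLt
  rw [this, Finset.card_map, Finset.card_univ, Fintype.card_fin]

lemma legal_xst (t s n : ℕ) (ht : 3 ≤ t) (hts : t ≤ s) (hn : s + 1 ≤ n) :
    (∑ v : Fin n, (if (v : ℕ) < t - 1 then 1 / (t : ℝ)
      else if (v : ℕ) = t - 1 ∨ (v : ℕ) = s then 1 / (2 * (t : ℝ)) else 0)) = 1 := by
  have hT0 : (0:ℝ) < (t:ℝ) := by
    have : 0 < t := by omega
    exact_mod_cast this
  rw [Fin.sum_univ_eq_sum_range (fun m => if m < t - 1 then 1 / (t : ℝ)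
      else if m = t - 1 ∨ m = s then 1 / (2 * (t : ℝ)) else 0) n]
  have hsplit : ∀ m ∈ Finset.range n,
      (if m < t - 1 then 1 / (t : ℝ) else if m = t - 1 ∨ m = s then 1 / (2 * (t : ℝ)) else 0)
        = (if m < t - 1 then 1 / (t : ℝ) else 0)
          + ((if m = t - 1 then 1 / (2 * (t : ℝ)) else 0)
          + (if m = s then 1 / (2 * (t : ℝ)) else 0)) := by
    intro m _
    rcases lt_trichotomy m (t-1) with h | h | h
    · rw [if_pos h, if_pos h, if_neg (by omega), if_neg (by omega)]; ring
    · rw [if_neg (by omega), if_pos (Or.inl h), if_neg (by omega), if_pos h,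
        if_neg (by omega)]; ring
    · by_cases hm : m = s
      · rw [if_neg (by omega), if_pos (Or.inr hm), if_neg (by omega), if_neg (by omega),
          if_pos hm]; ring
      · rw [if_neg (by omega), if_neg (by push_neg; exact ⟨by omega, hm⟩), if_neg (by omega),
          if_neg (by omega), if_neg hm]; ring
  rw [Finset.sum_congr rfl hsplit, Finset.sum_add_distrib, Finset.sum_add_distrib]
  rw [Finset.sum_ite_eq' (Finset.range n) (t-1) (fun _ => 1 / (2*(t:ℝ)))]
  rw [Finset.sum_ite_eq' (Finset.range n) s (fun _ => 1 / (2*(t:ℝ)))]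
  rw [if_pos (Finset.mem_range.2 (by omega)), if_pos (Finset.mem_range.2 (by omega))]
  rw [← Finset.sum_filter]
  have hfr : (Finset.range n).filter (fun m => m < t - 1) = Finset.range (t-1) := by
    ext m; simp only [Finset.mem_filter, Finset.mem_range]; omega
  rw [hfr, Finset.sum_const, Finset.card_range, nsmul_eq_mul]
  have hcast : ((t-1 : ℕ) : ℝ) = (t:ℝ) - 1 := by
    have h1 : (1:ℕ) ≤ t := by omega
    push_cast [h1]
    ring
  rw [hcast]
  field_simp
  ring

set_option maxHeartbeats 2000000 in
/-- Sharpness of the edge bound in Theorem 7: the {1,3}-graph with singletons {1},…,{t},{s+1} and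
3-edges [s]^(3) ∪ {{i₁,i₂,s+1} : {i₁,i₂} ∈ [t-1]^(2)} ∪ {{1,t,s+1}} (so with exactly
C(s,3)+C(t-1,2)+1 edges of size 3) has Lagrangian exceeding λ'(K_t^{1,3}). -/
theorem edge_bound_sharp (t s n : ℕ) (ht : 3 ≤ t) (hts : t ≤ s) (hn : s + 1 ≤ n)
    (E : Finset (Finset (Fin n)))
    (hE : E =
      (Finset.univ.filter (fun e : Finset (Fin n) =>
        e.card = 1 ∧ ∀ v ∈ e, (v : ℕ) < t ∨ (v : ℕ) = s)) ∪
      (Finset.univ.filter (fun e : Finset (Fin n) =>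
        e.card = 3 ∧ ∀ v ∈ e, (v : ℕ) < s)) ∪
      (Finset.univ.filter (fun e : Finset (Fin n) =>
        e.card = 3 ∧ (⟨s, by omega⟩ : Fin n) ∈ e ∧
          ∀ v ∈ e.erase (⟨s, by omega⟩ : Fin n), (v : ℕ) < t - 1)) ∪
      {({⟨0, by omega⟩, ⟨t - 1, by omega⟩, ⟨s, by omega⟩} : Finset (Fin n))}) :
    (E.filter (fun e => e.card = 3)).card = Nat.choose s 3 + Nat.choose (t - 1) 2 + 1 ∧
    lagrangian E > 1 + ((t : ℝ) - 1) * ((t : ℝ) - 2) / (t : ℝ) ^ 2 ∧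
    lagrangian (completeEdges t ({1, 3} : Finset ℕ)) =
      1 + ((t : ℝ) - 1) * ((t : ℝ) - 2) / (t : ℝ) ^ 2 ∧
    isLegal (fun v : Fin n => if (v : ℕ) < t - 1 then 1 / (t : ℝ)
      else if (v : ℕ) = t - 1 ∨ (v : ℕ) = s then 1 / (2 * (t : ℝ)) else 0) ∧
    lagPoly E (fun v : Fin n => if (v : ℕ) < t - 1 then 1 / (t : ℝ)
        else if (v : ℕ) = t - 1 ∨ (v : ℕ) = s then 1 / (2 * (t : ℝ)) else 0) >
      1 + ((t : ℝ) - 1) * ((t : ℝ) - 2) / (t : ℝ) ^ 2 := by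
  classical
  have hsn : s < n := by omega
  set T := (t:ℝ) with hTdef
  have hT0 : (0:ℝ) < T := by
    have : 0 < t := by omega
    rw [hTdef]; exact_mod_cast this
  set x : Fin n → ℝ := (fun v : Fin n => if (v : ℕ) < t - 1 then 1 / (t : ℝ)
      else if (v : ℕ) = t - 1 ∨ (v : ℕ) = s then 1 / (2 * (t : ℝ)) else 0) with hxdef
  set sv : Fin n := ⟨s, by omega⟩ with hsv
  set tv : Fin n := ⟨t-1, by omega⟩ with htv
  set zv : Fin n := ⟨0, by omega⟩ with hzv
  have hsvval : (sv : ℕ) = s := by rw [hsv]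
  have htvval : (tv : ℕ) = t - 1 := by rw [htv]
  have hzvval : (zv : ℕ) = 0 := by rw [hzv]
  have hE' : E =
      (Finset.univ.filter (fun e : Finset (Fin n) =>
        e.card = 1 ∧ ∀ v ∈ e, (v : ℕ) < t ∨ (v : ℕ) = s)) ∪
      (Finset.univ.filter (fun e : Finset (Fin n) =>
        e.card = 3 ∧ ∀ v ∈ e, (v : ℕ) < s)) ∪
      (Finset.univ.filter (fun e : Finset (Fin n) =>
        e.card = 3 ∧ sv ∈ e ∧ ∀ v ∈ e.erase sv, (v : ℕ) < t - 1)) ∪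
      {({zv, tv, sv} : Finset (Fin n))} := hE
  clear hE
  -- vertex sets
  set L1 : Finset (Fin n) := univ.filter (fun v : Fin n => (v:ℕ) < t-1) with hL1
  set Lt : Finset (Fin n) := univ.filter (fun v : Fin n => (v:ℕ) < t) with hLt
  set Ls : Finset (Fin n) := univ.filter (fun v : Fin n => (v:ℕ) < s) with hLs
  have hcardL1 : L1.card = t-1 := card_lows _ (by omega)
  have hcardLs : Ls.card = s := card_lows _ (by omega)
  -- values of x
  have hx_lt : ∀ v : Fin n, (v:ℕ) < t-1 → x v = 1/T := by
    intro v hv; rw [hxdef]; simp only [if_pos hv, hTdef]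
  have hx_tv : x tv = 1/(2*T) := by
    rw [hxdef]
    simp only [htvval]
    rw [hTdef]
    simp
  have hx_sv : x sv = 1/(2*T) := by
    rw [hxdef]
    simp only [hsvval]
    rw [if_neg (by omega : ¬ s < t - 1), hTdef]
    simp
  have hx_zero : ∀ v : Fin n, ¬((v:ℕ) < t) → (v:ℕ) ≠ s → x v = 0 := by
    intro v h1 h2
    rw [hxdef]
    dsimp only
    rw [if_neg (by omega), if_neg (by push_neg; exact ⟨by omega, h2⟩)]
  have hx_nonneg : ∀ v, 0 ≤ x v := by
    intro v
    rw [hxdef]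
    dsimp only
    split_ifs <;> positivity
  have hsum : ∑ v, x v = 1 := by
    rw [hxdef]; exact legal_xst t s n ht hts hn
  have hlegal : isLegal x := ⟨hsum, hx_nonneg⟩
  -- distinctness
  have hzt : zv ≠ tv := by
    intro h
    have h2 := congrArg Fin.val h
    rw [hzvval, htvval] at h2
    omega
  have hzs : zv ≠ sv := by
    intro h
    have h2 := congrArg Fin.val h
    rw [hzvval, hsvval] at h2
    omega
  have hts' : tv ≠ sv := by
    intro h
    have h2 := congrArg Fin.val h
    rw [htvval, hsvval] at h2
    omega
  -- the quad edge
  have hqcard : ({zv, tv, sv} : Finset (Fin n)).card = 3 := by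
    rw [Finset.card_insert_of_notMem (by simp [hzt, hzs]),
      Finset.card_insert_of_notMem (by simp [hts']), Finset.card_singleton]
  have hqprod : ∏ i ∈ ({zv, tv, sv} : Finset (Fin n)), x i = x zv * (x tv * x sv) := by
    rw [Finset.prod_insert (by simp [hzt, hzs]), Finset.prod_insert (by simp [hts']),
      Finset.prod_singleton]
  -- piece 1 structure
  have hP1 : (Finset.univ.filter (fun e : Finset (Fin n) =>
        e.card = 1 ∧ ∀ v ∈ e, (v : ℕ) < t ∨ (v : ℕ) = s))
      = (univ.filter (fun v : Fin n => (v:ℕ) < t ∨ (v:ℕ) = s)).map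
        ⟨fun v => ({v} : Finset (Fin n)), Finset.singleton_injective⟩ := by
    ext e
    simp only [mem_filter, mem_univ, true_and, mem_map, Function.Embedding.coeFn_mk,
      Finset.card_eq_one]
    constructor
    · rintro ⟨⟨a, rfl⟩, hQ⟩
      exact ⟨a, hQ a (Finset.mem_singleton_self a), rfl⟩
    · rintro ⟨a, hQ, rfl⟩
      exact ⟨⟨a, rfl⟩, fun v hv => by rwa [Finset.mem_singleton.1 hv]⟩
  -- piece 2 structure
  have hP2 : (Finset.univ.filter (fun e : Finset (Fin n) =>
        e.card = 3 ∧ ∀ v ∈ e, (v : ℕ) < s)) = Ls.powersetCard 3 := by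
    ext e
    simp only [mem_filter, mem_univ, true_and, Finset.mem_powersetCard, Finset.subset_iff, hLs]
    constructor
    · rintro ⟨h1, h2⟩
      exact ⟨fun v hv => by simp [h2 v hv], h1⟩
    · rintro ⟨h1, h2⟩
      refine ⟨h2, fun v hv => ?_⟩
      have := h1 v hv
      exact this
  -- piece 3 structure
  have hP3 : (Finset.univ.filter (fun e : Finset (Fin n) =>
        e.card = 3 ∧ sv ∈ e ∧ ∀ v ∈ e.erase sv, (v : ℕ) < t - 1))
      = (L1.powersetCard 2).image (insert sv) := by
    ext e
    simp only [mem_filter, mem_univ, true_and, Finset.mem_image]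
    constructor
    · rintro ⟨hc, hse, hlt⟩
      refine ⟨e.erase sv, ?_, Finset.insert_erase hse⟩
      rw [Finset.mem_powersetCard]
      refine ⟨fun v hv => ?_, ?_⟩
      · rw [hL1]
        simp only [mem_filter, mem_univ, true_and]
        exact hlt v hv
      · rw [Finset.card_erase_of_mem hse, hc]
    · rintro ⟨f, hf, rfl⟩
      obtain ⟨hfsub, hfc⟩ := Finset.mem_powersetCard.1 hf
      have hsvf : sv ∉ f := by
        intro h
        have := hfsub h
        rw [hL1] at this
        simp only [mem_filter, mem_univ, true_and, hsvval] at this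
        omega
      refine ⟨?_, Finset.mem_insert_self _ _, ?_⟩
      · rw [Finset.card_insert_of_notMem hsvf, hfc]
      · intro v hv
        rw [Finset.erase_insert hsvf] at hv
        have := hfsub hv
        rw [hL1] at this
        simp only [mem_filter, mem_univ, true_and] at this
        exact this
  -- injectivity for insert sv on 2-subsets of L1
  have hsv_not_mem : ∀ f ∈ L1.powersetCard 2, sv ∉ f := by
    intro f hf h
    have := (Finset.mem_powersetCard.1 hf).1 h
    rw [hL1] at this
    simp only [mem_filter, mem_univ, true_and, hsvval] at this
    omega
  have hinj : ∀ f ∈ L1.powersetCard 2, ∀ g ∈ L1.powersetCard 2,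
      insert sv f = insert sv g → f = g := by
    intro f hf g hg hfg
    rw [← Finset.erase_insert (hsv_not_mem f hf), ← Finset.erase_insert (hsv_not_mem g hg), hfg]
  -- membership of quad in pieces: no
  have hq_not1 : ({zv, tv, sv} : Finset (Fin n)) ∉ (Finset.univ.filter
      (fun e : Finset (Fin n) => e.card = 1 ∧ ∀ v ∈ e, (v : ℕ) < t ∨ (v : ℕ) = s)) := by
    simp only [mem_filter, mem_univ, true_and, not_and]
    intro h
    omega
  have hq_not2 : ({zv, tv, sv} : Finset (Fin n)) ∉ (Finset.univ.filter
      (fun e : Finset (Fin n) => e.card = 3 ∧ ∀ v ∈ e, (v : ℕ) < s)) := by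
    simp only [mem_filter, mem_univ, true_and, not_and]
    intro _ h
    have h2 := h sv (Finset.mem_insert_of_mem (Finset.mem_insert_of_mem (Finset.mem_singleton_self sv)))
    rw [hsvval] at h2
    omega
  have hq_not3 : ({zv, tv, sv} : Finset (Fin n)) ∉ (Finset.univ.filter
      (fun e : Finset (Fin n) => e.card = 3 ∧ sv ∈ e ∧ ∀ v ∈ e.erase sv, (v : ℕ) < t - 1)) := by
    simp only [mem_filter, mem_univ, true_and, not_and]
    intro _ _
    push_neg
    exact ⟨tv, Finset.mem_erase.2 ⟨hts',
      Finset.mem_insert_of_mem (Finset.mem_insert_self tv {sv})⟩, htvval.ge⟩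
  -- pairwise disjointness
  have hd12 : Disjoint (Finset.univ.filter (fun e : Finset (Fin n) =>
        e.card = 1 ∧ ∀ v ∈ e, (v : ℕ) < t ∨ (v : ℕ) = s))
      (Finset.univ.filter (fun e : Finset (Fin n) => e.card = 3 ∧ ∀ v ∈ e, (v : ℕ) < s)) := by
    rw [Finset.disjoint_left]
    intro e he hf
    simp only [mem_filter] at he hf
    omega
  have hd13 : Disjoint (Finset.univ.filter (fun e : Finset (Fin n) =>
        e.card = 1 ∧ ∀ v ∈ e, (v : ℕ) < t ∨ (v : ℕ) = s))
      (Finset.univ.filter (fun e : Finset (Fin n) =>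
        e.card = 3 ∧ sv ∈ e ∧ ∀ v ∈ e.erase sv, (v : ℕ) < t - 1)) := by
    rw [Finset.disjoint_left]
    intro e he hf
    simp only [mem_filter] at he hf
    omega
  have hd23 : Disjoint (Finset.univ.filter (fun e : Finset (Fin n) =>
        e.card = 3 ∧ ∀ v ∈ e, (v : ℕ) < s))
      (Finset.univ.filter (fun e : Finset (Fin n) =>
        e.card = 3 ∧ sv ∈ e ∧ ∀ v ∈ e.erase sv, (v : ℕ) < t - 1)) := by
    rw [Finset.disjoint_left]
    intro e he hf
    simp only [mem_filter] at he hf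
    have h2 := he.2.2 sv hf.2.2.1
    rw [hsvval] at h2
    omega
  have hd12_3 : Disjoint ((Finset.univ.filter (fun e : Finset (Fin n) =>
        e.card = 1 ∧ ∀ v ∈ e, (v : ℕ) < t ∨ (v : ℕ) = s)) ∪
      (Finset.univ.filter (fun e : Finset (Fin n) => e.card = 3 ∧ ∀ v ∈ e, (v : ℕ) < s)))
      (Finset.univ.filter (fun e : Finset (Fin n) =>
        e.card = 3 ∧ sv ∈ e ∧ ∀ v ∈ e.erase sv, (v : ℕ) < t - 1)) :=
    Finset.disjoint_union_left.2 ⟨hd13, hd23⟩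
  have hd123_q : Disjoint ((Finset.univ.filter (fun e : Finset (Fin n) =>
        e.card = 1 ∧ ∀ v ∈ e, (v : ℕ) < t ∨ (v : ℕ) = s)) ∪
      (Finset.univ.filter (fun e : Finset (Fin n) => e.card = 3 ∧ ∀ v ∈ e, (v : ℕ) < s)) ∪
      (Finset.univ.filter (fun e : Finset (Fin n) =>
        e.card = 3 ∧ sv ∈ e ∧ ∀ v ∈ e.erase sv, (v : ℕ) < t - 1)))
      ({({zv, tv, sv} : Finset (Fin n))} : Finset (Finset (Fin n))) := by
    rw [Finset.disjoint_singleton_right]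
    simp only [Finset.mem_union]
    push_neg
    exact ⟨⟨hq_not1, hq_not2⟩, hq_not3⟩
  -- values of binomials
  have hc2 : ∑ e ∈ L1.powersetCard 2, ∏ i ∈ e, x i = ((t-1).choose 2 : ℝ) * (1/T)^2 := by
    rw [← hcardL1]
    exact sum_pc_const L1 2 x (1/T) (fun i hi => hx_lt i (by
      rw [hL1] at hi
      exact (mem_filter.1 hi).2))
  have hc3 : ∑ e ∈ L1.powersetCard 3, ∏ i ∈ e, x i = ((t-1).choose 3 : ℝ) * (1/T)^3 := by
    rw [← hcardL1]
    exact sum_pc_const L1 3 x (1/T) (fun i hi => hx_lt i (by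
      rw [hL1] at hi
      exact (mem_filter.1 hi).2))
  -- sum over piece 1
  have hS1 : ∑ e ∈ (Finset.univ.filter (fun e : Finset (Fin n) =>
        e.card = 1 ∧ ∀ v ∈ e, (v : ℕ) < t ∨ (v : ℕ) = s)),
      ((Nat.factorial e.card : ℕ) : ℝ) * ∏ i ∈ e, x i = 1 := by
    rw [hP1, Finset.sum_map]
    simp only [Function.Embedding.coeFn_mk, Finset.card_singleton, Nat.factorial_one,
      Nat.cast_one, one_mul, Finset.prod_singleton]
    rw [Finset.sum_subset (Finset.filter_subset _ univ), hsum]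
    intro v _ hv
    simp only [mem_filter, mem_univ, true_and] at hv
    push_neg at hv
    exact hx_zero v (by omega) hv.2
  -- sum over piece 2
  have hLtLs : Lt ⊆ Ls := by
    rw [hLt, hLs]
    intro v hv
    simp only [mem_filter, mem_univ, true_and] at hv ⊢
    omega
  have hS2' : ∑ e ∈ Lt.powersetCard 3, ∏ i ∈ e, x i
      = ∑ e ∈ Ls.powersetCard 3, ∏ i ∈ e, x i := by
    apply Finset.sum_subset (Finset.powersetCard_mono hLtLs)
    intro e he hne
    obtain ⟨hesub, hec⟩ := Finset.mem_powersetCard.1 he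
    have : ¬ (e ⊆ Lt) := fun h => hne (Finset.mem_powersetCard.2 ⟨h, hec⟩)
    obtain ⟨v, hv, hvn⟩ := Finset.not_subset.1 this
    have hvs : (v:ℕ) < s := by
      have := hesub hv
      rw [hLs] at this
      exact (mem_filter.1 this).2
    have hvt : ¬ (v:ℕ) < t := by
      intro h
      exact hvn (by rw [hLt]; exact mem_filter.2 ⟨mem_univ v, h⟩)
    exact Finset.prod_eq_zero hv (hx_zero v hvt (by omega))
  have hLt_ins : Lt = insert tv L1 := by
    rw [hLt, hL1]
    ext v
    simp only [mem_filter, mem_univ, true_and, Finset.mem_insert, Fin.ext_iff, htvval]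
    omega
  have htvL1 : tv ∉ L1 := by
    rw [hL1]
    simp only [mem_filter, mem_univ, true_and, htvval]
    omega
  have hS2pc : ∑ e ∈ Lt.powersetCard 3, ∏ i ∈ e, x i
      = ((t-1).choose 3 : ℝ) * (1/T)^3 + (1/(2*T)) * (((t-1).choose 2 : ℝ) * (1/T)^2) := by
    rw [hLt_ins, show (3:ℕ) = 2+1 from rfl, sum_pc_insert x htvL1 2, hc3, hc2, hx_tv]
  have hS2 : ∑ e ∈ (Finset.univ.filter (fun e : Finset (Fin n) =>
        e.card = 3 ∧ ∀ v ∈ e, (v : ℕ) < s)),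
      ((Nat.factorial e.card : ℕ) : ℝ) * ∏ i ∈ e, x i
      = 6 * (((t-1).choose 3 : ℝ) * (1/T)^3
          + (1/(2*T)) * (((t-1).choose 2 : ℝ) * (1/T)^2)) := by
    rw [hP2]
    have hcong : ∀ e ∈ Ls.powersetCard 3,
        ((Nat.factorial e.card : ℕ) : ℝ) * ∏ i ∈ e, x i = 6 * ∏ i ∈ e, x i := by
      intro e he
      rw [(Finset.mem_powersetCard.1 he).2]
      norm_num [Nat.factorial]
    rw [Finset.sum_congr rfl hcong, ← Finset.mul_sum, ← hS2', hS2pc]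
  -- sum over piece 3
  have hS3 : ∑ e ∈ (Finset.univ.filter (fun e : Finset (Fin n) =>
        e.card = 3 ∧ sv ∈ e ∧ ∀ v ∈ e.erase sv, (v : ℕ) < t - 1)),
      ((Nat.factorial e.card : ℕ) : ℝ) * ∏ i ∈ e, x i
      = 6 * ((1/(2*T)) * (((t-1).choose 2 : ℝ) * (1/T)^2)) := by
    rw [hP3, Finset.sum_image hinj]
    have hcong : ∀ f ∈ L1.powersetCard 2,
        ((Nat.factorial (insert sv f).card : ℕ) : ℝ) * ∏ i ∈ insert sv f, x i
          = (6 * (1/(2*T))) * ∏ i ∈ f, x i := by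
      intro f hf
      have h1 : sv ∉ f := hsv_not_mem f hf
      rw [Finset.card_insert_of_notMem h1, (Finset.mem_powersetCard.1 hf).2,
        Finset.prod_insert h1, hx_sv]
      norm_num [Nat.factorial]
      ring
    rw [Finset.sum_congr rfl hcong, ← Finset.mul_sum, hc2]
    ring
  -- sum over piece 4
  have hS4 : ∑ e ∈ ({({zv, tv, sv} : Finset (Fin n))} : Finset (Finset (Fin n))),
      ((Nat.factorial e.card : ℕ) : ℝ) * ∏ i ∈ e, x i
      = 6 * ((1/T) * ((1/(2*T)) * (1/(2*T)))) := by
    rw [Finset.sum_singleton, hqcard, hqprod, hx_sv, hx_tv,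
      hx_lt zv (by rw [hzvval]; omega)]
    norm_num [Nat.factorial]
  -- total
  have hqc3 : (t.choose 3 : ℝ) = ((t-1).choose 3 : ℝ) + ((t-1).choose 2 : ℝ) := by
    obtain ⟨m, rfl⟩ : ∃ m, t = m + 1 := ⟨t - 1, by omega⟩
    rw [Nat.add_sub_cancel]
    have := Nat.choose_succ_succ m 2
    push_cast [this]
    ring
  have hchoose6 : (t.choose 3 : ℝ) * 6 = T * (T-1) * (T-2) := by
    rw [hTdef]; exact choose3_cast t ht
  have hlagval : lagPoly E x = 1 + (T-1)*(T-2)/T^2 + 3/(2*T^3) := by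
    rw [lagPoly, hE', Finset.sum_union hd123_q, Finset.sum_union hd12_3,
      Finset.sum_union hd12, hS1, hS2, hS3, hS4]
    have hTne : T ≠ 0 := ne_of_gt hT0
    have h6 : 6 * (((t-1).choose 3 : ℝ) + ((t-1).choose 2 : ℝ)) = T * (T-1) * (T-2) := by
      rw [← hqc3]; linarith [hchoose6]
    have hc3e : ((t-1).choose 3 : ℝ) = T*(T-1)*(T-2)/6 - ((t-1).choose 2 : ℝ) := by
      linarith [h6]
    rw [hc3e]
    field_simp
    ring
  have hxgt : lagPoly E x > 1 + (T - 1) * (T - 2) / T ^ 2 := by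
    rw [hlagval]
    have : 0 < 3/(2*T^3) := by positivity
    linarith
  -- the count of 3-edges
  have hcount : (E.filter (fun e => e.card = 3)).card
      = Nat.choose s 3 + Nat.choose (t - 1) 2 + 1 := by
    rw [hE', Finset.filter_union, Finset.filter_union, Finset.filter_union]
    have hf1 : Finset.filter (fun e => e.card = 3) (Finset.univ.filter
        (fun e : Finset (Fin n) => e.card = 1 ∧ ∀ v ∈ e, (v : ℕ) < t ∨ (v : ℕ) = s)) = ∅ := by
      rw [Finset.filter_eq_empty_iff]
      intro e he
      simp only [mem_filter] at he
      omega
    have hf2 : Finset.filter (fun e => e.card = 3) (Finset.univ.filter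
        (fun e : Finset (Fin n) => e.card = 3 ∧ ∀ v ∈ e, (v : ℕ) < s))
        = Finset.univ.filter (fun e : Finset (Fin n) => e.card = 3 ∧ ∀ v ∈ e, (v : ℕ) < s) := by
      apply Finset.filter_true_of_mem
      intro e he
      exact (mem_filter.1 he).2.1
    have hf3 : Finset.filter (fun e => e.card = 3) (Finset.univ.filter
        (fun e : Finset (Fin n) => e.card = 3 ∧ sv ∈ e ∧ ∀ v ∈ e.erase sv, (v : ℕ) < t - 1))
        = Finset.univ.filter (fun e : Finset (Fin n) =>
            e.card = 3 ∧ sv ∈ e ∧ ∀ v ∈ e.erase sv, (v : ℕ) < t - 1) := by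
      apply Finset.filter_true_of_mem
      intro e he
      exact (mem_filter.1 he).2.1
    have hf4 : Finset.filter (fun e => e.card = 3)
        ({({zv, tv, sv} : Finset (Fin n))} : Finset (Finset (Fin n)))
        = ({({zv, tv, sv} : Finset (Fin n))} : Finset (Finset (Fin n))) := by
      apply Finset.filter_true_of_mem
      intro e he
      rw [Finset.mem_singleton.1 he]
      exact hqcard
    rw [hf1, hf2, hf3, hf4, Finset.empty_union]
    rw [Finset.card_union_of_disjoint (by
      refine Finset.disjoint_singleton_right.2 ?_
      simp only [Finset.mem_union]
      push_neg
      exact ⟨hq_not2, hq_not3⟩)]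
    rw [Finset.card_union_of_disjoint hd23, Finset.card_singleton]
    congr 1
    congr 1
    · rw [hP2, Finset.card_powersetCard, hcardLs]
    · rw [hP3, Finset.card_image_of_injOn (fun f hf g hg h => hinj f hf g hg h),
        Finset.card_powersetCard, hcardL1]
  -- boundedness of the value set
  have hcard13 : ∀ e ∈ E, e.card = 1 ∨ e.card = 3 := by
    intro e he
    rw [hE'] at he
    rcases Finset.mem_union.1 he with he' | he'
    · rcases Finset.mem_union.1 he' with he'' | he''
      · rcases Finset.mem_union.1 he'' with h | h
        · exact Or.inl (mem_filter.1 h).2.1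
        · exact Or.inr (mem_filter.1 h).2.1
      · exact Or.inr (mem_filter.1 he'').2.1
    · rw [Finset.mem_singleton.1 he']
      exact Or.inr hqcard
  have hbdd : BddAbove {v : ℝ | ∃ y : Fin n → ℝ, isLegal y ∧ lagPoly E y = v} := by
    refine ⟨6 * (E.card : ℝ), ?_⟩
    rintro v ⟨y, ⟨hys, hyp⟩, rfl⟩
    have hy1 : ∀ i, y i ≤ 1 := by
      intro i
      rw [← hys]
      exact Finset.single_le_sum (fun j _ => hyp j) (mem_univ i)
    have : lagPoly E y ≤ ∑ _e ∈ E, (6:ℝ) := by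
      apply Finset.sum_le_sum
      intro e he
      have hp1 : ∏ i ∈ e, y i ≤ 1 :=
        Finset.prod_le_one (fun i _ => hyp i) (fun i _ => hy1 i)
      have hp0 : 0 ≤ ∏ i ∈ e, y i := Finset.prod_nonneg (fun i _ => hyp i)
      have hfle : ((Nat.factorial e.card : ℕ) : ℝ) ≤ 6 := by
        rcases hcard13 e he with h | h <;> rw [h] <;> norm_num [Nat.factorial]
      calc ((Nat.factorial e.card : ℕ) : ℝ) * ∏ i ∈ e, y i
          ≤ 6 * 1 := by
            apply mul_le_mul hfle hp1 hp0 (by norm_num)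
        _ = 6 := by norm_num
    rw [Finset.sum_const, nsmul_eq_mul] at this
    calc lagPoly E y ≤ (E.card : ℝ) * 6 := this
      _ = 6 * (E.card : ℝ) := by ring
  have hlagE : lagrangian E > 1 + (T - 1) * (T - 2) / T ^ 2 := by
    have hmem : lagPoly E x ∈ {v : ℝ | ∃ y : Fin n → ℝ, isLegal y ∧ lagPoly E y = v} :=
      ⟨x, hlegal, rfl⟩
    have := le_csSup hbdd hmem
    calc 1 + (T - 1) * (T - 2) / T ^ 2 < lagPoly E x := hxgt
      _ ≤ lagrangian E := this
  exact ⟨hcount, hlagE, by rw [hTdef]; exact lag_complete_eq t ht, hlegal, hxgt⟩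
end
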